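/- In the slab setting, let 0 ≤ q₁^w ≤ q₂^w ≤ 1 and let C_w ⊆ C(q₁^w, q₂^w) be a measurable set such that C′ ∩ C(q₁^w, q₂^w) = ∅, q₁ ≥ q₁^w and q₂ ≥ q₂^w. If Pr(X ∈ C′) ≤ Pr(X ∈ C_w), then Pr(Y ∈ C′) ≤ Pr(Y ∈ C_w). -/

import Mathlib

open MeasureTheory ProbabilityTheory Real Filter

open scoped NNReal ENNReal

/-- The standard normal cumulative distribution function Φ. -/
noncomputable def Phi (t : ℝ) : ℝ := (gaussianReal 0 1 (Set.Iic t)).toReal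

/-- The inverse Φ⁻¹ of the standard normal CDF (meaningful on (0,1)). -/
noncomputable def PhiInv : ℝ → ℝ := Function.invFun Phi

/-- The Gaussian measure N(m, σ²I) on ℝ^d. -/
noncomputable def gaussianVec {d : ℕ} (m : Fin d → ℝ) (σ : ℝ) :
    Measure (Fin d → ℝ) :=
  Measure.pi fun i => gaussianReal (m i) (Real.toNNReal (σ ^ 2))

/-- Dot product on ℝ^d. -/
def dotp {d : ℕ} (a b : Fin d → ℝ) : ℝ := ∑ i, a i * b i

/-- Euclidean (ℓ₂) norm on ℝ^d. -/
noncomputable def l2norm {d : ℕ} (a : Fin d → ℝ) : ℝ := Real.sqrt (∑ i, a i ^ 2)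

/-- Φ⁻¹ extended to EReal with the conventions Φ⁻¹(0) = −∞, Φ⁻¹(1) = +∞. -/
noncomputable def PhiInvE (p : ℝ) : EReal :=
  if p ≤ 0 then ⊥ else if 1 ≤ p then ⊤ else ((PhiInv p : ℝ) : EReal)

/-- Φ extended to EReal with Φ(−∞) = 0 and Φ(+∞) = 1. -/
noncomputable def PhiE (e : EReal) : ℝ :=
  if e = ⊥ then 0 else if e = ⊤ then 1 else Phi e.toReal

/-- The slab C(a,b) = {z : σ‖δ‖₂ Φ⁻¹(1−b) < δᵀ(z−x) ≤ σ‖δ‖₂ Φ⁻¹(1−a)},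
with the conventions Φ⁻¹(0) = −∞ and Φ⁻¹(1) = +∞ (assuming σ‖δ‖₂ > 0, the
defining inequalities are stated for the normalized quantity δᵀ(z−x)/(σ‖δ‖₂)). -/
noncomputable def slab {d : ℕ} (σ : ℝ) (x δ : Fin d → ℝ) (a b : ℝ) :
    Set (Fin d → ℝ) :=
  {z | PhiInvE (1 - b) < ((dotp δ (z - x) / (σ * l2norm δ) : ℝ) : EReal) ∧
      ((dotp δ (z - x) / (σ * l2norm δ) : ℝ) : EReal) ≤ PhiInvE (1 - a)}

section Aux

/-! ### Facts about Φ and Φ⁻¹ -/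

lemma phi_eq_cdf (t : ℝ) : Phi t = cdf (gaussianReal 0 1) t := by
  rw [cdf_eq_real]; rfl

lemma phi_mono : Monotone Phi := by
  simp only [funext phi_eq_cdf]; exact monotone_cdf _

lemma gauss_singleton (a : ℝ) : gaussianReal 0 1 {a} = 0 := by
  rw [gaussianReal_apply 0 one_ne_zero]
  exact setLIntegral_measure_zero _ _ (measure_singleton a)

lemma gauss_Ioc_pos {s t : ℝ} (h : s < t) : 0 < gaussianReal 0 1 (Set.Ioc s t) := by
  rw [gaussianReal_apply 0 one_ne_zero]
  rw [setLIntegral_pos_iff (measurable_gaussianPDF 0 1)]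
  have hsupp : Function.support (gaussianPDF 0 1) = Set.univ := by
    ext y; simp [Function.mem_support, (gaussianPDF_pos 0 one_ne_zero y).ne']
  rw [hsupp, Set.univ_inter, Real.volume_Ioc]
  simpa using h

lemma phi_tendsto_atBot : Tendsto Phi atBot (nhds 0) := by
  simp only [funext phi_eq_cdf]; exact tendsto_cdf_atBot _

lemma phi_tendsto_atTop : Tendsto Phi atTop (nhds 1) := by
  simp only [funext phi_eq_cdf]; exact tendsto_cdf_atTop _

lemma phi_strictMono : StrictMono Phi := by
  intro s t hst
  have h1 : gaussianReal 0 1 (Set.Iic t)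
      = gaussianReal 0 1 (Set.Iic s) + gaussianReal 0 1 (Set.Ioc s t) := by
    rw [← measure_union ?_ measurableSet_Ioc, Set.Iic_union_Ioc_eq_Iic hst.le]
    exact Set.disjoint_left.mpr (fun y hy hy2 => absurd hy2.1 (not_lt.mpr hy))
  have hne : ∀ u : Set ℝ, gaussianReal 0 1 u ≠ ⊤ := fun u => measure_ne_top _ u
  unfold Phi
  rw [h1, ENNReal.toReal_add (hne _) (hne _)]
  have := ENNReal.toReal_pos (gauss_Ioc_pos hst).ne' (hne (Set.Ioc s t))
  linarith

lemma ofReal_phi (x : ℝ) : ENNReal.ofReal (Phi x) = gaussianReal 0 1 (Set.Iic x) :=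
  ENNReal.ofReal_toReal (measure_ne_top _ _)

lemma phi_surj {p : ℝ} (h0 : 0 < p) (h1 : p < 1) : ∃ t, Phi t = p := by
  set S := {s : ℝ | Phi s < p} with hS
  have hne : S.Nonempty := (phi_tendsto_atBot.eventually_lt_const h0).exists
  obtain ⟨T, hT⟩ : ∃ T, p < Phi T := (phi_tendsto_atTop.eventually_const_lt h1).exists
  have hbdd : BddAbove S := ⟨T, fun s hs => by
    by_contra hc
    exact absurd (phi_mono (not_le.mp hc).le) (not_le.mpr (lt_trans hs hT))⟩
  set t₀ := sSup S with ht₀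
  refine ⟨t₀, ?_⟩
  have hupper : ENNReal.ofReal p ≤ gaussianReal 0 1 (Set.Iic t₀) := by
    have hset : ⋂ n : ℕ, Set.Iic (t₀ + 1/(n+1)) = Set.Iic t₀ := by
      ext z
      simp only [Set.mem_iInter, Set.mem_Iic]
      constructor
      · intro h
        by_contra hc
        push_neg at hc
        obtain ⟨n, hn⟩ := exists_nat_one_div_lt (sub_pos.mpr hc)
        have := h n
        linarith
      · intro h n
        have : (0:ℝ) < 1/(n+1) := by positivity
        linarith
    have htend := tendsto_measure_iInter_atTop (μ := gaussianReal 0 1)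
      (s := fun n : ℕ => Set.Iic (t₀ + 1/(n+1)))
      (fun n => measurableSet_Iic.nullMeasurableSet)
      (fun m n hmn => Set.Iic_subset_Iic.mpr (by
        have : (1:ℝ)/(n+1) ≤ 1/(m+1) := by
          apply one_div_le_one_div_of_le (by positivity)
          exact_mod_cast by omega
        linarith))
      ⟨0, measure_ne_top _ _⟩
    rw [hset] at htend
    refine ge_of_tendsto' htend (fun n => ?_)
    simp only [Function.comp_apply]
    rw [← ofReal_phi]
    apply ENNReal.ofReal_le_ofReal
    have ht : t₀ < t₀ + 1/(n+1) := by
      have : (0:ℝ) < 1/(n+1) := by positivity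
      linarith
    have : t₀ + 1/(n+1) ∉ S := fun hmem => absurd (le_csSup hbdd hmem) (not_le.mpr ht)
    exact not_lt.mp this
  have hlower : gaussianReal 0 1 (Set.Iio t₀) ≤ ENNReal.ofReal p := by
    have hset : ⋃ n : ℕ, Set.Iic (t₀ - 1/(n+1)) = Set.Iio t₀ := by
      ext z
      simp only [Set.mem_iUnion, Set.mem_Iic, Set.mem_Iio]
      constructor
      · rintro ⟨n, hn⟩
        have : (0:ℝ) < 1/(n+1) := by positivity
        linarith
      · intro h
        obtain ⟨n, hn⟩ := exists_nat_one_div_lt (sub_pos.mpr h)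
        exact ⟨n, by linarith⟩
    have htend := tendsto_measure_iUnion_atTop (μ := gaussianReal 0 1)
      (s := fun n : ℕ => Set.Iic (t₀ - 1/(n+1)))
      (fun m n hmn => Set.Iic_subset_Iic.mpr (by
        have : (1:ℝ)/(n+1) ≤ 1/(m+1) := by
          apply one_div_le_one_div_of_le (by positivity)
          exact_mod_cast by omega
        linarith))
    rw [hset] at htend
    refine le_of_tendsto' htend (fun n => ?_)
    simp only [Function.comp_apply]
    rw [← ofReal_phi]
    apply ENNReal.ofReal_le_ofReal
    have h1n : (0:ℝ) < 1/(n+1) := by positivity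
    obtain ⟨s', hs', hlt⟩ := exists_lt_of_lt_csSup hne (by linarith : t₀ - 1/(n+1) < t₀)
    exact (phi_mono hlt.le).trans hs'.le
  have hIic : gaussianReal 0 1 (Set.Iic t₀) ≤ ENNReal.ofReal p := by
    calc gaussianReal 0 1 (Set.Iic t₀)
        ≤ gaussianReal 0 1 (Set.Iio t₀) + gaussianReal 0 1 {t₀} := by
          rw [← Set.Iio_union_right]; exact measure_union_le _ _
      _ = gaussianReal 0 1 (Set.Iio t₀) := by rw [gauss_singleton, add_zero]
      _ ≤ ENNReal.ofReal p := hlower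
  have : gaussianReal 0 1 (Set.Iic t₀) = ENNReal.ofReal p := le_antisymm hIic hupper
  unfold Phi
  rw [this, ENNReal.toReal_ofReal h0.le]

lemma phi_phiInv {p : ℝ} (h0 : 0 < p) (h1 : p < 1) : Phi (PhiInv p) = p := by
  obtain ⟨t, ht⟩ := phi_surj h0 h1
  exact Function.invFun_eq ⟨t, ht⟩

lemma phiInv_mono {p p' : ℝ} (h0 : 0 < p) (hpp : p ≤ p') (h1 : p' < 1) :
    PhiInv p ≤ PhiInv p' := by
  by_contra hc
  push_neg at hc
  have := phi_strictMono hc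
  rw [phi_phiInv h0 (lt_of_le_of_lt hpp h1), phi_phiInv (lt_of_lt_of_le h0 hpp) h1] at this
  linarith

lemma phiInvE_mono {a b : ℝ} (h : a ≤ b) : PhiInvE a ≤ PhiInvE b := by
  unfold PhiInvE
  by_cases ha : a ≤ 0
  · simp only [ha, if_true]
    exact bot_le
  · have ha' : ¬ b ≤ 0 := fun hb => ha (h.trans hb)
    simp only [ha, ha', if_false]
    by_cases hb1 : 1 ≤ b
    · simp only [hb1, if_true]
      exact le_top
    · have ha1 : ¬ 1 ≤ a := fun h1 => hb1 (h1.trans h)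
      simp only [hb1, ha1, if_false]
      exact EReal.coe_le_coe_iff.mpr
        (phiInv_mono (not_le.mp ha) h (not_le.mp hb1))

/-! ### Product-measure density lemmas -/

lemma lintegral_pi_prod : ∀ {n : ℕ} (μ : Fin n → Measure ℝ), (∀ i, SigmaFinite (μ i)) →
    ∀ (f : Fin n → ℝ → ENNReal), (∀ i, Measurable (f i)) →
    ∫⁻ z, ∏ i, f i (z i) ∂Measure.pi μ = ∏ i, ∫⁻ t, f i t ∂(μ i) := by
  intro n
  induction n with
  | zero =>
      intro μ _ f hf
      simp only [Finset.univ_eq_empty, Finset.prod_empty, lintegral_one]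
      rw [Measure.pi_univ]
      simp
  | succ n ih =>
      intro μ hμ f hf
      have := hμ
      have hmp := measurePreserving_piFinSuccAbove μ 0
      have hG : Measurable (fun y : ℝ × (Fin n → ℝ) => f 0 y.1 * ∏ j, f (Fin.succ j) (y.2 j)) := by
        apply Measurable.mul
        · exact (hf 0).comp measurable_fst
        · exact Finset.measurable_prod _ (fun j _ =>
            (hf _).comp ((measurable_pi_apply j).comp measurable_snd))
      have key := hmp.lintegral_comp (μ := Measure.pi μ) hG
      have heq : ∀ z : Fin (n+1) → ℝ,
          (fun y : ℝ × (Fin n → ℝ) => f 0 y.1 * ∏ j, f (Fin.succ j) (y.2 j))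
            (MeasurableEquiv.piFinSuccAbove (fun _ => ℝ) 0 z) = ∏ i, f i (z i) := by
        intro z
        rw [Fin.prod_univ_succ]
        simp [MeasurableEquiv.piFinSuccAbove, Fin.insertNthEquiv, Fin.zero_succAbove, Fin.tail]
      simp only [heq] at key
      rw [key]
      rw [lintegral_prod_mul (f := f 0)
        (g := fun y : Fin n → ℝ => ∏ j, f (Fin.succ j) (y j)) (hf 0).aemeasurable
        (Finset.measurable_prod _ (fun j _ => (hf _).comp (measurable_pi_apply j))).aemeasurable]
      simp only [Fin.zero_succAbove]
      rw [ih (fun j => μ j.succ) (fun j => inferInstance) (fun j => f j.succ) (fun j => hf _),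
        Fin.prod_univ_succ]

lemma gaussianReal_shift (m c : ℝ) {v : ℝ≥0} (hv : v ≠ 0) :
    gaussianReal (m + c) v = (gaussianReal m v).withDensity
      (fun t => ENNReal.ofReal (Real.exp ((c * (t - m) - c^2/2) / v))) := by
  have hg : Measurable (fun t : ℝ => ENNReal.ofReal (Real.exp ((c * (t - m) - c^2/2) / (v:ℝ)))) := by
    fun_prop
  rw [gaussianReal_of_var_ne_zero _ hv, gaussianReal_of_var_ne_zero _ hv,
    ← withDensity_mul _ (measurable_gaussianPDF m v) hg]
  congr 1
  funext t
  simp only [Pi.mul_apply, gaussianPDF]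
  rw [← ENNReal.ofReal_mul (gaussianPDFReal_nonneg m v t)]
  congr 1
  unfold gaussianPDFReal
  have hv' : (v:ℝ) ≠ 0 := by exact_mod_cast hv
  have hexp : (-(t - (m+c))^2/(2*(v:ℝ))) = -(t-m)^2/(2*(v:ℝ)) + (c*(t-m) - c^2/2)/(v:ℝ) := by
    field_simp
    ring
  rw [hexp, Real.exp_add]
  ring

lemma gaussianVec_shift {d : ℕ} {σ : ℝ} (hσ : 0 < σ) (x δ : Fin d → ℝ) :
    gaussianVec (x + δ) σ = (gaussianVec x σ).withDensity
      (fun z => ∏ i, ENNReal.ofReal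
        (Real.exp ((δ i * (z i - x i) - (δ i)^2/2) / ((σ^2 : ℝ).toNNReal : ℝ)))) := by
  set v : ℝ≥0 := (σ^2 : ℝ).toNNReal with hv_def
  have hv : v ≠ 0 := by
    simp only [hv_def, ne_eq, Real.toNNReal_eq_zero, not_le]
    positivity
  set g : Fin d → ℝ → ℝ≥0∞ :=
    fun i t => ENNReal.ofReal (Real.exp ((δ i * (t - x i) - (δ i)^2/2) / (v:ℝ))) with hg_def
  have hgm : ∀ i, Measurable (g i) := fun i => by fun_prop
  unfold gaussianVec
  refine (Measure.pi_eq (fun s hs => ?_))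
  rw [withDensity_apply _ (MeasurableSet.univ_pi hs),
    ← lintegral_indicator (MeasurableSet.univ_pi hs)]
  have hind : ∀ z : Fin d → ℝ,
      (Set.univ.pi s).indicator (fun z => ∏ i, g i (z i)) z
        = ∏ i, (s i).indicator (g i) (z i) := by
    intro z
    by_cases hz : z ∈ Set.univ.pi s
    · rw [Set.indicator_of_mem hz]
      exact Finset.prod_congr rfl (fun i _ =>
        (Set.indicator_of_mem (hz i (Set.mem_univ i)) _).symm)
    · rw [Set.indicator_of_notMem hz]
      have : ∃ i, z i ∉ s i := by
        by_contra hc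
        push_neg at hc
        exact hz (fun i _ => hc i)
      obtain ⟨i, hi⟩ := this
      exact (Finset.prod_eq_zero (Finset.mem_univ i)
        (by rw [Set.indicator_of_notMem hi])).symm
  change ∫⁻ a, (Set.univ.pi s).indicator (fun z => ∏ i, g i (z i)) a ∂_ = _
  simp only [hind]
  rw [lintegral_pi_prod _ (fun i => inferInstance) _
    (fun i => (hgm i).indicator (hs i))]
  refine Finset.prod_congr rfl (fun i _ => ?_)
  rw [lintegral_indicator (hs i), Pi.add_apply, gaussianReal_shift (x i) (δ i) hv,
    withDensity_apply _ (hs i)]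

/-! ### Measurability of slabs -/

lemma measurable_dotproj {d : ℕ} (σ : ℝ) (x δ : Fin d → ℝ) :
    Measurable (fun z : Fin d → ℝ => dotp δ (z - x) / (σ * l2norm δ)) := by
  apply Measurable.div_const
  unfold dotp
  exact Finset.measurable_sum _ (fun i _ => by
    have : Measurable (fun z : Fin d → ℝ => z i - x i) :=
      (measurable_pi_apply i).sub measurable_const
    exact (measurable_const.mul (by simpa using this) : _))

lemma measurableSet_slab {d : ℕ} (σ : ℝ) (x δ : Fin d → ℝ) (a b : ℝ) :
    MeasurableSet (slab σ x δ a b) := by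
  have : slab σ x δ a b = (fun z : Fin d → ℝ =>
      ((dotp δ (z - x) / (σ * l2norm δ) : ℝ) : EReal)) ⁻¹'
      (Set.Ioc (PhiInvE (1 - b)) (PhiInvE (1 - a))) := rfl
  rw [this]
  exact (measurable_coe_real_ereal.comp (measurable_dotproj σ x δ)) measurableSet_Ioc

end Aux

/-- Lemma 10 of the paper (comparison with a disjoint region): in the slab
setting, if C_w ⊆ C(q₁ʷ,q₂ʷ) is measurable, C′ ∩ C(q₁ʷ,q₂ʷ) = ∅, q₁ ≥ q₁ʷ,
q₂ ≥ q₂ʷ, and Pr(X ∈ C′) ≤ Pr(X ∈ C_w), then Pr(Y ∈ C′) ≤ Pr(Y ∈ C_w). -/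
theorem slab_disjoint_comparison
    {d : ℕ} (hd : 1 ≤ d) (σ : ℝ) (hσ : 0 < σ)
    (x δ : Fin d → ℝ) (hδ : δ ≠ 0)
    (q1 q2 : ℝ) (hq1 : 0 ≤ q1) (hq12 : q1 < q2) (hq2 : q2 ≤ 1)
    (n : ℕ) (e1 e2 : Fin n → ℝ)
    (he : ∀ i, q1 ≤ e1 i ∧ e1 i ≤ e2 i ∧ e2 i ≤ q2)
    (C' : Set (Fin d → ℝ))
    (hC' : C' = slab σ x δ q1 q2 \ ⋃ i, slab σ x δ (e1 i) (e2 i))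
    (q1w q2w : ℝ) (hw0 : 0 ≤ q1w) (hw : q1w ≤ q2w) (hw1 : q2w ≤ 1)
    (Cw : Set (Fin d → ℝ)) (hCw : MeasurableSet Cw)
    (hCwsub : Cw ⊆ slab σ x δ q1w q2w)
    (hdisj : C' ∩ slab σ x δ q1w q2w = ∅)
    (h1 : q1w ≤ q1) (h2 : q2w ≤ q2)
    (hX : gaussianVec x σ C' ≤ gaussianVec x σ Cw) :
    gaussianVec (x + δ) σ C' ≤ gaussianVec (x + δ) σ Cw := by
  classical
  -- positivity facts
  have hsum : 0 < ∑ i, δ i ^ 2 := by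
    have hex : ∃ i, δ i ≠ 0 := by
      by_contra hc; push_neg at hc; exact hδ (funext hc)
    obtain ⟨i, hi⟩ := hex
    exact Finset.sum_pos' (fun j _ => sq_nonneg _) ⟨i, Finset.mem_univ i, by positivity⟩
  have hl2 : 0 < l2norm δ := Real.sqrt_pos.mpr hsum
  have hσδ : 0 < σ * l2norm δ := mul_pos hσ hl2
  set vr : ℝ := ((σ^2 : ℝ).toNNReal : ℝ) with hvr_def
  have hvr : vr = σ^2 := Real.coe_toNNReal _ (sq_nonneg σ)
  have hvrpos : 0 < vr := by rw [hvr]; positivity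
  -- measurability of C'
  have hC'meas : MeasurableSet C' := by
    rw [hC']
    exact (measurableSet_slab σ x δ q1 q2).diff
      (MeasurableSet.iUnion (fun i => measurableSet_slab σ x δ (e1 i) (e2 i)))
  -- one-sided bounds on the projection
  set L : EReal := PhiInvE (1 - q2w) with hL_def
  have hC'le : ∀ z ∈ C', ((dotp δ (z - x) / (σ * l2norm δ) : ℝ) : EReal) ≤ L := by
    intro z hz
    have hz' := hz
    rw [hC'] at hz'
    have hz1 : z ∈ slab σ x δ q1 q2 := hz'.1
    have hzw : z ∉ slab σ x δ q1w q2w := fun hwmem =>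
      Set.eq_empty_iff_forall_notMem.mp hdisj z ⟨hz, hwmem⟩
    have hup : ((dotp δ (z - x) / (σ * l2norm δ) : ℝ) : EReal) ≤ PhiInvE (1 - q1) := hz1.2
    have hup2 : ((dotp δ (z - x) / (σ * l2norm δ) : ℝ) : EReal) ≤ PhiInvE (1 - q1w) :=
      hup.trans (phiInvE_mono (by linarith))
    by_contra hc
    exact hzw ⟨not_le.mp hc, hup2⟩
  have hCwgt : ∀ z ∈ Cw, L < ((dotp δ (z - x) / (σ * l2norm δ) : ℝ) : EReal) :=
    fun z hz => (hCwsub hz).1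
  -- density representation of the shifted measure
  have hshift := gaussianVec_shift hσ x δ
  set gfun : (Fin d → ℝ) → ℝ≥0∞ := fun z => ∏ i, ENNReal.ofReal
    (Real.exp ((δ i * (z i - x i) - (δ i)^2/2) / vr)) with hgfun_def
  have hgval : ∀ z, gfun z
      = ENNReal.ofReal (Real.exp ((dotp δ (z - x) - (∑ i, δ i^2)/2) / vr)) := by
    intro z
    simp only [hgfun_def]
    rw [← ENNReal.ofReal_prod_of_nonneg (fun i _ => Real.exp_nonneg _)]
    congr 1
    rw [← Real.exp_sum]
    congr 1
    have hdot : dotp δ (z - x) = ∑ i, δ i * (z i - x i) := rfl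
    rw [hdot, ← Finset.sum_div]
    congr 1
    rw [Finset.sum_sub_distrib, Finset.sum_div]
  have hgm : Measurable gfun :=
    Finset.measurable_prod _ (fun i _ => by fun_prop)
  -- case analysis on L
  by_cases hLbot : L = ⊥
  · have hempty : C' = ∅ := by
      apply Set.eq_empty_iff_forall_notMem.mpr
      intro z hz
      have := hC'le z hz
      rw [hLbot] at this
      exact (EReal.coe_ne_bot _) (le_bot_iff.mp this)
    rw [hempty]
    simp
  by_cases hLtop : L = ⊤
  · have hCwempty : Cw = ∅ := by
      apply Set.eq_empty_iff_forall_notMem.mpr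
      intro z hz
      have := hCwgt z hz
      rw [hLtop] at this
      exact not_top_lt this
    have hCw0 : gaussianVec x σ Cw = 0 := by rw [hCwempty]; simp
    have hC'0 : gaussianVec x σ C' = 0 := le_antisymm (hCw0 ▸ hX) zero_le
    rw [hshift, withDensity_apply _ hC'meas]
    rw [setLIntegral_measure_zero _ _ hC'0]
    exact zero_le
  -- main case: L is a real number
  have hL : ((L.toReal : ℝ) : EReal) = L := EReal.coe_toReal hLtop hLbot
  set ℓ : ℝ := L.toReal with hℓ_def
  set c : ℝ≥0∞ := ENNReal.ofReal
    (Real.exp ((σ * l2norm δ * ℓ - (∑ i, δ i^2)/2) / vr)) with hc_def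
  have hC'g : ∀ z ∈ C', gfun z ≤ c := by
    intro z hz
    rw [hgval, hc_def]
    have hle : dotp δ (z - x) / (σ * l2norm δ) ≤ ℓ := by
      have := hC'le z hz
      rw [← hL] at this
      exact_mod_cast this
    have hdle : dotp δ (z - x) ≤ σ * l2norm δ * ℓ := by
      have h := (div_le_iff₀ hσδ).mp hle
      calc dotp δ (z - x) ≤ ℓ * (σ * l2norm δ) := h
        _ = σ * l2norm δ * ℓ := by ring
    apply ENNReal.ofReal_le_ofReal
    apply Real.exp_le_exp.mpr
    apply div_le_div_of_nonneg_right ?_ hvrpos.le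
    linarith
  have hCwg : ∀ z ∈ Cw, c ≤ gfun z := by
    intro z hz
    rw [hgval, hc_def]
    have hle : ℓ ≤ dotp δ (z - x) / (σ * l2norm δ) := by
      have := hCwgt z hz
      rw [← hL] at this
      exact_mod_cast this.le
    have hdle : σ * l2norm δ * ℓ ≤ dotp δ (z - x) := by
      have h := (le_div_iff₀ hσδ).mp hle
      calc σ * l2norm δ * ℓ = ℓ * (σ * l2norm δ) := by ring
        _ ≤ dotp δ (z - x) := h
    apply ENNReal.ofReal_le_ofReal
    apply Real.exp_le_exp.mpr
    apply div_le_div_of_nonneg_right ?_ hvrpos.le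
    linarith
  calc gaussianVec (x + δ) σ C' = ∫⁻ z in C', gfun z ∂gaussianVec x σ := by
        rw [hshift, withDensity_apply _ hC'meas]
    _ ≤ ∫⁻ _ in C', c ∂gaussianVec x σ := setLIntegral_mono measurable_const hC'g
    _ = c * gaussianVec x σ C' := setLIntegral_const _ _
    _ ≤ c * gaussianVec x σ Cw := mul_le_mul_right hX c
    _ = ∫⁻ _ in Cw, c ∂gaussianVec x σ := (setLIntegral_const _ _).symm
    _ ≤ ∫⁻ z in Cw, gfun z ∂gaussianVec x σ := setLIntegral_mono hgm hCwg
    _ = gaussianVec (x + δ) σ Cw := by rw [hshift, withDensity_apply _ hCw]
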